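/- The Price of Anarchy of 2-type Swap Schelling Games with o > 1 agents of the minority color and n total agents is at most (n·o·(n−o) − n)/(o·(o−1)·(n−o)). In particular, every swap equilibrium has social welfare at least o − 1, and the optimal social welfare is at most n − 1/o − 1/(n−o). -/

import Mathlib

open SimpleGraph Finset
open scoped Classical

noncomputable def ssgUtil {V A : Type*} [Fintype V] [DecidableEq V]
    (G : SimpleGraph V) [DecidableRel G.Adj]
    {k : ℕ} (c : A → Fin k) (σ : A ≃ V) (i : A) : ℚ :=
  (((G.neighborFinset (σ i)).filter (fun v => c (σ.symm v) = c i)).card : ℚ) /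
    (G.degree (σ i) : ℚ)

def ssgSwap {V A : Type*} [DecidableEq V] (σ : A ≃ V) (i j : A) : A ≃ V :=
  σ.trans (Equiv.swap (σ i) (σ j))

def ssgProfitable {V A : Type*} [Fintype V] [DecidableEq V]
    (G : SimpleGraph V) [DecidableRel G.Adj]
    {k : ℕ} (c : A → Fin k) (σ : A ≃ V) (i j : A) : Prop :=
  c i ≠ c j ∧
    ssgUtil G c σ i < ssgUtil G c (ssgSwap σ i j) i ∧
    ssgUtil G c σ j < ssgUtil G c (ssgSwap σ i j) j

def ssgEquilibrium {V A : Type*} [Fintype V] [DecidableEq V]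
    (G : SimpleGraph V) [DecidableRel G.Adj]
    {k : ℕ} (c : A → Fin k) (σ : A ≃ V) : Prop :=
  ∀ i j : A, ¬ ssgProfitable G c σ i j

def ssgLocalEquilibrium {V A : Type*} [Fintype V] [DecidableEq V]
    (G : SimpleGraph V) [DecidableRel G.Adj]
    {k : ℕ} (c : A → Fin k) (σ : A ≃ V) : Prop :=
  ∀ i j : A, G.Adj (σ i) (σ j) → ¬ ssgProfitable G c σ i j

noncomputable def ssgWelfare {V A : Type*} [Fintype V] [DecidableEq V] [Fintype A]
    (G : SimpleGraph V) [DecidableRel G.Adj]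
    {k : ℕ} (c : A → Fin k) (σ : A ≃ V) : ℚ :=
  ∑ i : A, ssgUtil G c σ i

noncomputable def ssgPhi {V A : Type*} [Fintype V] [DecidableEq V]
    (G : SimpleGraph V) [DecidableRel G.Adj]
    {k : ℕ} (c : A → Fin k) (σ : A ≃ V) : ℕ :=
  (G.edgeFinset.filter (fun e => ∀ u ∈ e, ∀ v ∈ e, c (σ.symm u) = c (σ.symm v))).card


set_option linter.unusedSectionVars false

section Aux

variable {V A : Type*} [Fintype V] [DecidableEq V]
variable (G : SimpleGraph V) [DecidableRel G.Adj]

lemma fin2_eq_of_ne {x y z : Fin 2} (h : y ≠ z) : (¬ x = z) ↔ x = y := by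
  revert h; revert x y z; decide

lemma ssgUtil_nonneg {k : ℕ} (c : A → Fin k) (σ : A ≃ V) (i : A) :
    0 ≤ ssgUtil G c σ i := by
  unfold ssgUtil; positivity

lemma ssgUtil_le_one {k : ℕ} (c : A → Fin k) (σ : A ≃ V) (i : A) :
    ssgUtil G c σ i ≤ 1 := by
  unfold ssgUtil
  rcases Nat.eq_zero_or_pos (G.degree (σ i)) with h | h
  · rw [h]; simp
  · apply div_le_one_of_le₀
    · exact_mod_cast (Finset.card_filter_le _ _).trans
        (le_of_eq (G.card_neighborFinset_eq_degree (σ i)))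
    · positivity

lemma ssg_degree_pos (hconn : G.Connected) (h2 : 1 < Fintype.card V) (v : V) :
    0 < G.degree v := by
  rw [G.degree_pos_iff_exists_adj]
  obtain ⟨w, hw⟩ := Fintype.exists_ne_of_one_lt_card h2 v
  obtain ⟨p⟩ := hconn.preconnected v w
  cases p with
  | nil => exact absurd rfl hw
  | cons h _ => exact ⟨_, h⟩

lemma ssg_walk_cross {p : V → Prop} :
    ∀ {u w : V} (_ : G.Walk u w), p u → ¬ p w → ∃ a b, G.Adj a b ∧ p a ∧ ¬ p b := by
  intro u w q
  induction q with
  | nil => intro h1 h2; exact absurd h1 h2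
  | @cons u x w h q ih =>
    intro h1 h2
    by_cases hm : p x
    · exact ih hm h2
    · exact ⟨u, x, h, h1, hm⟩

lemma ssg_swap_util_ge {c : A → Fin 2} (σ : A ≃ V) {i j : A}
    (hd : 0 < G.degree (σ j)) (hc : c i ≠ c j) :
    1 - ssgUtil G c σ j -
      (if G.Adj (σ i) (σ j) then ((G.degree (σ j) : ℚ))⁻¹ else 0)
      ≤ ssgUtil G c (ssgSwap σ i j) i := by
  have hσ' : (ssgSwap σ i j) i = σ j := by simp [ssgSwap]
  have hdpos : (0:ℚ) < (G.degree (σ j) : ℚ) := by exact_mod_cast hd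
  set N := G.neighborFinset (σ j) with hN
  set Fc := N.filter (fun v => c (σ.symm v) = c i) with hFc
  set Fs := N.filter (fun v => c (σ.symm v) = c j) with hFs
  set F' := N.filter (fun v => c ((ssgSwap σ i j).symm v) = c i) with hF'
  have hsplit : Fs.card + Fc.card = G.degree (σ j) := by
    rw [hFs, hFc]
    have heq : N.filter (fun v => c (σ.symm v) = c i)
        = N.filter (fun v => ¬ (c (σ.symm v) = c j)) := by
      apply Finset.filter_congr
      intro v _
      exact (fin2_eq_of_ne hc).symm
    rw [heq, Finset.card_filter_add_card_filter_not, hN,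
      G.card_neighborFinset_eq_degree]
  have hsub : Fc \ {σ i} ⊆ F' := by
    intro v hv
    rw [Finset.mem_sdiff, Finset.mem_singleton] at hv
    obtain ⟨hv1, hv2⟩ := hv
    rw [hFc, Finset.mem_filter] at hv1
    rw [hF', Finset.mem_filter]
    refine ⟨hv1.1, ?_⟩
    have hadj : G.Adj (σ j) v := by
      have := hv1.1; rwa [hN, SimpleGraph.mem_neighborFinset] at this
    have hvj : v ≠ σ j := fun h => (G.ne_of_adj hadj) h.symm
    have : (ssgSwap σ i j).symm v = σ.symm v := by
      simp [ssgSwap, Equiv.symm_trans_apply, Equiv.symm_swap,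
        Equiv.swap_apply_of_ne_of_ne hv2 hvj]
    rw [this]; exact hv1.2
  have hut : ssgUtil G c (ssgSwap σ i j) i = (F'.card : ℚ) / (G.degree (σ j) : ℚ) := by
    unfold ssgUtil
    rw [hσ', hF', hN]
  have huj : ssgUtil G c σ j = (Fs.card : ℚ) / (G.degree (σ j) : ℚ) := by
    unfold ssgUtil; rw [hFs, hN]
  rw [hut, huj]
  have hsplitQ : (Fs.card : ℚ) + (Fc.card : ℚ) = (G.degree (σ j) : ℚ) := by
    exact_mod_cast hsplit
  by_cases hadj : G.Adj (σ i) (σ j)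
  · rw [if_pos hadj]
    have hcard : (Fc.card : ℚ) - 1 ≤ (F'.card : ℚ) := by
      have h1 : Fc.card ≤ (Fc \ {σ i}).card + 1 := by
        calc Fc.card ≤ (Fc \ {σ i}).card + ({σ i} : Finset V).card :=
              Finset.card_le_card_sdiff_add_card
        _ = (Fc \ {σ i}).card + 1 := by rw [Finset.card_singleton]
      have h2 : (Fc \ {σ i}).card ≤ F'.card := Finset.card_le_card hsub
      have : Fc.card ≤ F'.card + 1 := h1.trans (by omega)
      have := (Nat.cast_le (α := ℚ)).2 this
      push_cast at this ⊢
      linarith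
    have hL : 1 - (Fs.card : ℚ) / (G.degree (σ j) : ℚ) - ((G.degree (σ j) : ℚ))⁻¹
        = ((Fc.card : ℚ) - 1) / (G.degree (σ j) : ℚ) := by
      field_simp
      linarith
    rw [hL]
    gcongr
  · rw [if_neg hadj]
    have hsub2 : Fc ⊆ F' := by
      intro v hv
      apply hsub
      rw [Finset.mem_sdiff, Finset.mem_singleton]
      refine ⟨hv, ?_⟩
      intro h
      rw [hFc, Finset.mem_filter, hN, SimpleGraph.mem_neighborFinset] at hv
      exact hadj (h ▸ hv.1).symm
    have hcard : (Fc.card : ℚ) ≤ (F'.card : ℚ) := by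
      exact_mod_cast Finset.card_le_card hsub2
    have hL : 1 - (Fs.card : ℚ) / (G.degree (σ j) : ℚ) - 0
        = ((Fc.card : ℚ)) / (G.degree (σ j) : ℚ) := by
      field_simp
      linarith
    rw [hL]
    gcongr

lemma ssg_pair_bound {c : A → Fin 2} {σ : A ≃ V} (hdeg : ∀ v, 0 < G.degree v)
    (heq : ssgEquilibrium G c σ) {i j : A} (hc : c i ≠ c j) :
    1 - (if G.Adj (σ i) (σ j)
        then max ((G.degree (σ i) : ℚ))⁻¹ ((G.degree (σ j) : ℚ))⁻¹ else 0)
      ≤ ssgUtil G c σ i + ssgUtil G c σ j := by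
  have h1 := ssg_swap_util_ge G σ (hdeg (σ j)) hc
  have hswapcomm : ssgSwap σ i j = ssgSwap σ j i := by
    unfold ssgSwap; rw [Equiv.swap_comm]
  have h2 := ssg_swap_util_ge G σ (i := j) (j := i) (hdeg (σ i)) hc.symm
  rw [← hswapcomm] at h2
  have hP := heq i j
  unfold ssgProfitable at hP
  push_neg at hP
  have hd := hP hc
  by_cases hadj : G.Adj (σ i) (σ j)
  · rw [if_pos hadj] at h1 ⊢
    rw [if_pos (G.adj_symm hadj)] at h2
    rcases lt_or_ge (ssgUtil G c σ i) (ssgUtil G c (ssgSwap σ i j) i) with hlt | hge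
    · have := hd hlt
      have hb : 1 - ssgUtil G c σ i - ((G.degree (σ i) : ℚ))⁻¹ ≤ ssgUtil G c σ j :=
        h2.trans this
      have : ((G.degree (σ i) : ℚ))⁻¹ ≤ max ((G.degree (σ i) : ℚ))⁻¹ ((G.degree (σ j) : ℚ))⁻¹ :=
        le_max_left _ _
      linarith
    · have hb : 1 - ssgUtil G c σ j - ((G.degree (σ j) : ℚ))⁻¹ ≤ ssgUtil G c σ i :=
        h1.trans hge
      have : ((G.degree (σ j) : ℚ))⁻¹ ≤ max ((G.degree (σ i) : ℚ))⁻¹ ((G.degree (σ j) : ℚ))⁻¹ :=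
        le_max_right _ _
      linarith
  · rw [if_neg hadj] at h1 ⊢
    rw [if_neg (fun h => hadj (G.adj_symm h))] at h2
    rcases lt_or_ge (ssgUtil G c σ i) (ssgUtil G c (ssgSwap σ i j) i) with hlt | hge
    · have := hd hlt
      have hb : 1 - ssgUtil G c σ i - 0 ≤ ssgUtil G c σ j := h2.trans this
      linarith
    · have hb : 1 - ssgUtil G c σ j - 0 ≤ ssgUtil G c σ i := h1.trans hge
      linarith

lemma ssg_eq_welfare_ge [Fintype A] {c : A → Fin 2} {σ : A ≃ V}
    (hdeg : ∀ v, 0 < G.degree v) (heq : ssgEquilibrium G c σ)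
    (hmin' : (univ.filter (fun i : A => c i = 0)).card
      ≤ (univ.filter (fun i : A => ¬ c i = 0)).card) :
    ((univ.filter (fun i : A => c i = 0)).card : ℚ) - 1
      ≤ ∑ i : A, ssgUtil G c σ i := by
  set u := ssgUtil G c σ with hu
  set OF := univ.filter (fun i : A => c i = 0) with hOF
  set BF := univ.filter (fun i : A => ¬ c i = 0) with hBF
  set nb : A → Finset A := fun i => BF.filter (fun j => ¬ G.Adj (σ i) (σ j)) with hnb
  set Nh : Finset A → Finset A := fun S => S.biUnion nb with hNh
  have hnbBF : ∀ i, nb i ⊆ BF := fun i => Finset.filter_subset _ _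
  have hNhBF : ∀ S, Nh S ⊆ BF := by
    intro S x hx
    obtain ⟨a, _, hx⟩ := Finset.mem_biUnion.1 hx
    exact hnbBF a hx
  have hNhmono : ∀ {S T : Finset A}, S ⊆ T → Nh S ⊆ Nh T := by
    intro S T hST
    exact Finset.biUnion_subset_biUnion_of_subset_left nb hST
  obtain ⟨Sst, hSstP, hSstMax⟩ := Finset.exists_max_image OF.powerset
    (fun S => (S.card : ℤ) - ((Nh S).card : ℤ)) ⟨∅, Finset.empty_mem_powerset OF⟩
  have hSstOF : Sst ⊆ OF := Finset.mem_powerset.1 hSstP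
  set t : {x // x ∈ OF} → Finset A :=
    fun i => nb i.1 ∪ (if (i : A) ∈ Sst then BF \ Nh Sst else ∅) with ht
  have hall : ∀ s : Finset {x // x ∈ OF}, s.card ≤ (s.biUnion t).card := by
    intro s
    set T := s.image (fun i : {x // x ∈ OF} => (i : A)) with hT
    have hTcard : T.card = s.card :=
      Finset.card_image_of_injective s Subtype.val_injective
    have hTOF : T ⊆ OF := by
      intro x hx
      obtain ⟨i, _, rfl⟩ := Finset.mem_image.1 hx
      exact i.2
    have hNhT : Nh T ⊆ s.biUnion t := by
      intro x hx
      obtain ⟨a, haT, hx⟩ := Finset.mem_biUnion.1 hx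
      obtain ⟨i, his, rfl⟩ := Finset.mem_image.1 haT
      exact Finset.mem_biUnion.2 ⟨i, his, Finset.mem_union_left _ hx⟩
    by_cases hcase : (T ∩ Sst).Nonempty
    · obtain ⟨x0, hx0⟩ := hcase
      obtain ⟨i0, hi0s, hi0eq⟩ := Finset.mem_image.1 (Finset.mem_inter.1 hx0).1
      have hx0S : x0 ∈ Sst := (Finset.mem_inter.1 hx0).2
      have hBdiff : BF \ Nh Sst ⊆ s.biUnion t := by
        intro x hx
        refine Finset.mem_biUnion.2 ⟨i0, hi0s, Finset.mem_union_right _ ?_⟩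
        rw [if_pos (by rwa [hi0eq])]
        exact hx
      have hsub : Nh (T ∩ Sst) ∪ (BF \ Nh Sst) ⊆ s.biUnion t :=
        Finset.union_subset ((hNhmono Finset.inter_subset_left).trans hNhT) hBdiff
      have hdisj : Disjoint (Nh (T ∩ Sst)) (BF \ Nh Sst) :=
        Finset.disjoint_of_subset_left (hNhmono Finset.inter_subset_right)
          Finset.sdiff_disjoint.symm
      have hcard1 : (Nh (T ∩ Sst)).card + (BF \ Nh Sst).card ≤ (s.biUnion t).card := by
        rw [← Finset.card_union_of_disjoint hdisj]
        exact Finset.card_le_card hsub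
      have hmax := hSstMax (T ∩ Sst)
        (Finset.mem_powerset.2 (Finset.inter_subset_left.trans hTOF))
      have hsdiffcard : (BF \ Nh Sst).card = BF.card - (Nh Sst).card :=
        Finset.card_sdiff_of_subset (hNhBF Sst)
      have hNhSle : (Nh Sst).card ≤ BF.card := Finset.card_le_card (hNhBF Sst)
      have hTsplit : (T ∩ Sst).card + (T \ Sst).card = T.card :=
        Finset.card_inter_add_card_sdiff T Sst
      have hcard2 : Sst.card + (T \ Sst).card ≤ OF.card := by
        rw [← Finset.card_union_of_disjoint Finset.disjoint_sdiff]
        exact Finset.card_le_card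
          (Finset.union_subset hSstOF (Finset.sdiff_subset.trans hTOF))
      rw [← hTcard]
      omega
    · have hdisjTS : Disjoint T Sst := by
        rw [Finset.not_nonempty_iff_eq_empty] at hcase
        rwa [Finset.disjoint_iff_inter_eq_empty]
      have hmax := hSstMax (T ∪ Sst)
        (Finset.mem_powerset.2 (Finset.union_subset hTOF hSstOF))
      have hunion : Nh (T ∪ Sst) = Nh T ∪ Nh Sst := by
        ext x
        simp only [hNh, Finset.mem_biUnion, Finset.mem_union]
        constructor
        · rintro ⟨a, ha | ha, hx⟩
          · exact Or.inl ⟨a, ha, hx⟩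
          · exact Or.inr ⟨a, ha, hx⟩
        · rintro (⟨a, ha, hx⟩ | ⟨a, ha, hx⟩)
          · exact ⟨a, Or.inl ha, hx⟩
          · exact ⟨a, Or.inr ha, hx⟩
      have hc1 : (T ∪ Sst).card = T.card + Sst.card :=
        Finset.card_union_of_disjoint hdisjTS
      have hc2 : (Nh T ∪ Nh Sst).card ≤ (Nh T).card + (Nh Sst).card :=
        Finset.card_union_le _ _
      have hc3 : (Nh T).card ≤ (s.biUnion t).card := Finset.card_le_card hNhT
      have hcu : (Nh (T ∪ Sst)).card = (Nh T ∪ Nh Sst).card := by rw [hunion]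
      omega
  obtain ⟨g, hginj, hgmem⟩ :=
    (Finset.all_card_le_biUnion_card_iff_exists_injective t).1 hall
  have hgBF : ∀ i : {x // x ∈ OF}, g i ∈ BF := by
    intro i
    rcases Finset.mem_union.1 (hgmem i) with h | h
    · exact hnbBF _ h
    · by_cases hS : (i : A) ∈ Sst
      · rw [if_pos hS] at h
        exact (Finset.mem_sdiff.1 h).1
      · rw [if_neg hS] at h
        exact absurd h (Finset.notMem_empty _)
  have hadjfacts : ∀ i : {x // x ∈ OF}, G.Adj (σ i.1) (σ (g i)) →
      (i : A) ∈ Sst ∧ g i ∈ BF \ Nh Sst := by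
    intro i hadj
    rcases Finset.mem_union.1 (hgmem i) with h | h
    · exact absurd hadj (Finset.mem_filter.1 h).2
    · by_cases hS : (i : A) ∈ Sst
      · rw [if_pos hS] at h
        exact ⟨hS, h⟩
      · rw [if_neg hS] at h
        exact absurd h (Finset.notMem_empty _)
  have hAdjAll : ∀ x ∈ Sst, ∀ j ∈ BF \ Nh Sst, G.Adj (σ x) (σ j) := by
    intro x hx j hj
    have hjN : j ∉ Nh Sst := (Finset.mem_sdiff.1 hj).2
    have hjBF : j ∈ BF := (Finset.mem_sdiff.1 hj).1
    by_contra hna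
    exact hjN (Finset.mem_biUnion.2 ⟨x, hx, Finset.mem_filter.2 ⟨hjBF, hna⟩⟩)
  have hdegS : ∀ x ∈ Sst, (BF \ Nh Sst).card ≤ G.degree (σ x) := by
    intro x hx
    have hsub : ((BF \ Nh Sst).image (fun j => σ j)) ⊆ G.neighborFinset (σ x) := by
      intro v hv
      obtain ⟨j, hj, rfl⟩ := Finset.mem_image.1 hv
      rw [SimpleGraph.mem_neighborFinset]
      exact hAdjAll x hx j hj
    calc (BF \ Nh Sst).card
        = ((BF \ Nh Sst).image (fun j => σ j)).card :=
          (Finset.card_image_of_injective _ (σ.injective)).symm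
      _ ≤ (G.neighborFinset (σ x)).card := Finset.card_le_card hsub
      _ = G.degree (σ x) := G.card_neighborFinset_eq_degree (σ x)
  have hdegB : ∀ j ∈ BF \ Nh Sst, Sst.card ≤ G.degree (σ j) := by
    intro j hj
    have hsub : (Sst.image (fun x => σ x)) ⊆ G.neighborFinset (σ j) := by
      intro v hv
      obtain ⟨x, hx, rfl⟩ := Finset.mem_image.1 hv
      rw [SimpleGraph.mem_neighborFinset]
      exact (hAdjAll x hx j hj).symm
    calc Sst.card = (Sst.image (fun x => σ x)).card :=
          (Finset.card_image_of_injective _ (σ.injective)).symm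
      _ ≤ (G.neighborFinset (σ j)).card := Finset.card_le_card hsub
      _ = G.degree (σ j) := G.card_neighborFinset_eq_degree (σ j)
  set m0 := min Sst.card (BF \ Nh Sst).card with hm0
  have hpair : ∀ i : {x // x ∈ OF},
      1 - (if G.Adj (σ i.1) (σ (g i)) then ((m0 : ℚ))⁻¹ else 0) ≤ u i.1 + u (g i) := by
    intro i
    have hcross : c i.1 ≠ c (g i) := by
      have h0 : c i.1 = 0 := (Finset.mem_filter.1 i.2).2
      have h1 : ¬ c (g i) = 0 := (Finset.mem_filter.1 (hgBF i)).2
      rw [h0]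
      exact fun h => h1 h.symm
    have hb := ssg_pair_bound G hdeg heq hcross
    by_cases hadj : G.Adj (σ i.1) (σ (g i))
    · rw [if_pos hadj] at hb ⊢
      obtain ⟨hiS, hgS⟩ := hadjfacts i hadj
      have h1 : m0 ≤ G.degree (σ i.1) := (min_le_right _ _).trans (hdegS _ hiS)
      have h2 : m0 ≤ G.degree (σ (g i))  := (min_le_left _ _).trans (hdegB _ hgS)
      have hm0pos : 0 < m0 := by
        apply lt_min
        · exact Finset.card_pos.2 ⟨_, hiS⟩
        · exact Finset.card_pos.2 ⟨_, hgS⟩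
      have hmax : max ((G.degree (σ i.1) : ℚ))⁻¹ ((G.degree (σ (g i)) : ℚ))⁻¹
          ≤ ((m0 : ℚ))⁻¹ := by
        apply max_le
        · exact inv_anti₀ (by exact_mod_cast hm0pos) (by exact_mod_cast h1)
        · exact inv_anti₀ (by exact_mod_cast hm0pos) (by exact_mod_cast h2)
      linarith
    · rw [if_neg hadj] at hb ⊢
      exact hb
  set P := univ.filter (fun i : {x // x ∈ OF} => G.Adj (σ i.1) (σ (g i))) with hP
  have hPa : P.card ≤ Sst.card := by
    refine Finset.card_le_card_of_injOn (fun i => (i : A)) ?_ ?_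
    · intro i hi
      exact (hadjfacts i (Finset.mem_filter.1 hi).2).1
    · exact Set.injOn_of_injective Subtype.val_injective
  have hPb : P.card ≤ (BF \ Nh Sst).card := by
    refine Finset.card_le_card_of_injOn g ?_ ?_
    · intro i hi
      exact (hadjfacts i (Finset.mem_filter.1 hi).2).2
    · exact Set.injOn_of_injective hginj
  have hPm : P.card ≤ m0 := le_min hPa hPb
  have hsum1 : ∑ i : {x // x ∈ OF}, (1 - (if G.Adj (σ i.1) (σ (g i))
      then ((m0 : ℚ))⁻¹ else 0)) ≤ ∑ i : {x // x ∈ OF}, (u i.1 + u (g i)) :=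
    Finset.sum_le_sum (fun i _ => hpair i)
  have hsum2 : ∑ i : {x // x ∈ OF}, (1 - (if G.Adj (σ i.1) (σ (g i))
      then ((m0 : ℚ))⁻¹ else 0))
      = (OF.card : ℚ) - (P.card : ℚ) * ((m0 : ℚ))⁻¹ := by
    rw [Finset.sum_sub_distrib, Finset.sum_const, Finset.card_univ, Fintype.card_coe]
    congr 1
    · simp
    · rw [← Finset.sum_filter, ← hP, Finset.sum_const, nsmul_eq_mul]
  have hfrac : (P.card : ℚ) * ((m0 : ℚ))⁻¹ ≤ 1 := by
    rcases Nat.eq_zero_or_pos P.card with h | h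
    · rw [h]; simp
    · have hm0pos : (0:ℚ) < (m0 : ℚ) := by
        have : 0 < m0 := lt_of_lt_of_le h hPm
        exact_mod_cast this
      rw [← div_eq_mul_inv, div_le_one hm0pos]
      exact_mod_cast hPm
  have hsum3 : ∑ i : {x // x ∈ OF}, (u i.1 + u (g i)) ≤ ∑ i : A, u i := by
    rw [Finset.sum_add_distrib]
    have e1 : ∑ i : {x // x ∈ OF}, u i.1 = ∑ i ∈ OF, u i := Finset.sum_coe_sort OF u
    have e2 : ∑ i : {x // x ∈ OF}, u (g i) ≤ ∑ j ∈ BF, u j := by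
      have e3 : ∑ x ∈ (univ : Finset {x // x ∈ OF}).image g, u x
          = ∑ i : {x // x ∈ OF}, u (g i) :=
        Finset.sum_image (fun x _ y _ h => hginj h)
      rw [← e3]
      apply Finset.sum_le_sum_of_subset_of_nonneg
      · intro x hx
        obtain ⟨i, _, rfl⟩ := Finset.mem_image.1 hx
        exact hgBF i
      · intro i _ _
        exact ssgUtil_nonneg G c σ i
    have esplit : ∑ i : A, u i = ∑ i ∈ OF, u i + ∑ i ∈ BF, u i :=
      (Finset.sum_filter_add_sum_filter_not univ _ u).symm
    linarith
  linarith

lemma ssg_util_cross_bound [Fintype A] {c : A → Fin 2} (σ : A ≃ V) {i j : A}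
    (hadj : G.Adj (σ i) (σ j)) (hc : c j ≠ c i) :
    ssgUtil G c σ i ≤ 1 - 1 / ((univ.filter (fun x : A => c x = c i)).card : ℚ) := by
  set K := univ.filter (fun x : A => c x = c i) with hK
  have hiK : i ∈ K := Finset.mem_filter.2 ⟨Finset.mem_univ _, rfl⟩
  have hK1 : 1 ≤ K.card := Finset.card_pos.2 ⟨i, hiK⟩
  have hd : 0 < G.degree (σ i) := by
    rw [G.degree_pos_iff_exists_adj]
    exact ⟨σ j, hadj⟩
  set F := (G.neighborFinset (σ i)).filter (fun v => c (σ.symm v) = c i) with hF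
  have h1 : F.card ≤ K.card - 1 := by
    have hsub : F.image (fun v => σ.symm v) ⊆ K.erase i := by
      intro x hx
      obtain ⟨v, hv, rfl⟩ := Finset.mem_image.1 hx
      rw [hF, Finset.mem_filter, SimpleGraph.mem_neighborFinset] at hv
      refine Finset.mem_erase.2 ⟨?_, Finset.mem_filter.2 ⟨Finset.mem_univ _, hv.2⟩⟩
      intro h
      have : v = σ i := by
        have := congrArg σ h
        simpa using this
      exact (G.ne_of_adj hv.1) this.symm
    calc F.card = (F.image (fun v => σ.symm v)).card :=
          (Finset.card_image_of_injective _ σ.symm.injective).symm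
      _ ≤ (K.erase i).card := Finset.card_le_card hsub
      _ = K.card - 1 := Finset.card_erase_of_mem hiK
  have h2 : F.card ≤ G.degree (σ i) - 1 := by
    have hsub : F ⊆ (G.neighborFinset (σ i)).erase (σ j) := by
      intro v hv
      rw [hF, Finset.mem_filter] at hv
      refine Finset.mem_erase.2 ⟨?_, hv.1⟩
      intro h
      apply hc
      rw [← hv.2, h]
      simp
    calc F.card ≤ ((G.neighborFinset (σ i)).erase (σ j)).card :=
          Finset.card_le_card hsub
      _ = G.degree (σ i) - 1 := by
          rw [Finset.card_erase_of_mem (SimpleGraph.mem_neighborFinset _ _ _ |>.2 hadj),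
            G.card_neighborFinset_eq_degree]
  have hdQ : (0:ℚ) < (G.degree (σ i) : ℚ) := by exact_mod_cast hd
  have hKQ : (0:ℚ) < (K.card : ℚ) := by exact_mod_cast hK1
  have h1Q : (F.card : ℚ) ≤ (K.card : ℚ) - 1 := by
    have := (Nat.cast_le (α := ℚ)).2 h1
    rwa [Nat.cast_sub hK1] at this
  have h2Q : (F.card : ℚ) ≤ (G.degree (σ i) : ℚ) - 1 := by
    have := (Nat.cast_le (α := ℚ)).2 h2
    rwa [Nat.cast_sub hd] at this
  have hgoal : ssgUtil G c σ i = (F.card : ℚ) / (G.degree (σ i) : ℚ) := rfl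
  rw [hgoal]
  have hrw : 1 - 1 / (K.card : ℚ) = ((K.card : ℚ) - 1) / (K.card : ℚ) := by
    field_simp
  rw [hrw, div_le_div_iff₀ hdQ hKQ]
  rcases le_total ((G.degree (σ i)) : ℚ) ((K.card : ℚ)) with h | h
  · nlinarith
  · nlinarith

lemma ssg_welfare_le [Fintype A] (hconn : G.Connected) {c : A → Fin 2} (σ : A ≃ V)
    {o n : ℕ} (ho : o = (univ.filter (fun i : A => c i = 0)).card)
    (hn : n = Fintype.card A) (ho1 : 1 < o) (hmin : o ≤ n - o) :
    ∑ i : A, ssgUtil G c σ i ≤ (n : ℚ) - 1 / (o : ℚ) - 1 / ((n : ℚ) - (o : ℚ)) := by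
  set u := ssgUtil G c σ with hu
  set OF := univ.filter (fun i : A => c i = 0) with hOF
  set BF := univ.filter (fun i : A => ¬ c i = 0) with hBF
  have hsplitn : OF.card + BF.card = n := by
    rw [hOF, hBF, Finset.card_filter_add_card_filter_not, Finset.card_univ, hn]
  have hoOF : OF.card = o := ho.symm
  have hon : o ≤ n := by omega
  have hBcard : BF.card = n - o := by omega
  have hB2 : 2 ≤ n - o := le_trans ho1 hmin
  -- find a cross edge
  obtain ⟨i0, hi0⟩ : OF.Nonempty := Finset.card_pos.1 (by omega)
  obtain ⟨j0, hj0⟩ : BF.Nonempty := Finset.card_pos.1 (by omega)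
  obtain ⟨p⟩ := hconn.preconnected (σ i0) (σ j0)
  obtain ⟨a, b, hab, hpa, hpb⟩ := ssg_walk_cross G (p := fun v => c (σ.symm v) = 0) p
    (by simpa using (Finset.mem_filter.1 hi0).2)
    (by simpa using (Finset.mem_filter.1 hj0).2)
  set i := σ.symm a with hi
  set j := σ.symm b with hj
  have hσi : σ i = a := by simp [hi]
  have hσj : σ j = b := by simp [hj]
  have hci : c i = 0 := hpa
  have hcj : ¬ c j = 0 := hpb
  have hij : i ≠ j := fun h => hcj (h ▸ hci)
  have hadj : G.Adj (σ i) (σ j) := by rw [hσi, hσj]; exact hab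
  -- bounds for the two endpoints
  have hcri : c j ≠ c i := by rw [hci]; exact hcj
  have hbi : u i ≤ 1 - 1 / (o : ℚ) := by
    have := ssg_util_cross_bound G σ hadj hcri
    have hKe : univ.filter (fun x : A => c x = c i) = OF := by
      rw [hOF]
      apply Finset.filter_congr
      intro x _
      rw [hci]
    rwa [hKe, hoOF] at this
  have hbj : u j ≤ 1 - 1 / ((n : ℚ) - (o : ℚ)) := by
    have := ssg_util_cross_bound G σ (G.adj_symm hadj) (fun h => hcri h.symm)
    have hKe : univ.filter (fun x : A => c x = c j) = BF := by
      rw [hBF]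
      apply Finset.filter_congr
      intro x _
      exact (fin2_eq_of_ne hcj).symm
    rw [hKe, hBcard] at this
    have hc2 : ((n - o : ℕ) : ℚ) = (n : ℚ) - (o : ℚ) := by
      push_cast [Nat.cast_sub hon]
      ring
    rwa [hc2] at this
  -- sum bound
  have hsplit1 : ∑ x : A, u x = u i + ∑ x ∈ univ.erase i, u x :=
    (Finset.add_sum_erase univ u (Finset.mem_univ i)).symm
  have hjmem : j ∈ univ.erase i := Finset.mem_erase.2 ⟨hij.symm, Finset.mem_univ j⟩
  have hsplit2 : ∑ x ∈ univ.erase i, u x = u j + ∑ x ∈ (univ.erase i).erase j, u x :=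
    (Finset.add_sum_erase _ u hjmem).symm
  have hrest : ∑ x ∈ (univ.erase i).erase j, u x ≤ (n : ℚ) - 2 := by
    have h1 : ∑ x ∈ (univ.erase i).erase j, u x
        ≤ (((univ.erase i).erase j).card) • (1:ℚ) :=
      Finset.sum_le_card_nsmul _ _ 1 (fun x _ => ssgUtil_le_one G c σ x)
    have hcard : ((univ.erase i).erase j).card = n - 2 := by
      rw [Finset.card_erase_of_mem hjmem, Finset.card_erase_of_mem (Finset.mem_univ i),
        Finset.card_univ, ← hn]
      omega
    rw [hcard] at h1
    have : ((n - 2 : ℕ) : ℚ) = (n : ℚ) - 2 := by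
      have h2n : 2 ≤ n := by omega
      push_cast [Nat.cast_sub h2n]
      ring
    rw [nsmul_eq_mul, mul_one, this] at h1
    exact h1
  rw [hsplit1, hsplit2]
  linarith

end Aux

theorem stmt6 {V A : Type*} [Fintype V] [DecidableEq V] [Fintype A]
    (G : SimpleGraph V) [DecidableRel G.Adj] (hconn : G.Connected)
    (c : A → Fin 2) (o n : ℕ)
    (ho : o = (Finset.univ.filter (fun i : A => c i = 0)).card)
    (hn : n = Fintype.card A)
    (ho1 : 1 < o) (hmin : o ≤ n - o) :
    (∀ σ : A ≃ V, ssgEquilibrium G c σ → (o : ℚ) - 1 ≤ ssgWelfare G c σ) ∧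
    (∀ σ : A ≃ V,
      ssgWelfare G c σ ≤ (n : ℚ) - 1 / (o : ℚ) - 1 / ((n : ℚ) - (o : ℚ))) ∧
    (∀ σ σ' : A ≃ V, ssgEquilibrium G c σ →
      ssgWelfare G c σ' ≤
        (((n : ℚ) * (o : ℚ) * ((n : ℚ) - (o : ℚ)) - (n : ℚ)) /
          ((o : ℚ) * ((o : ℚ) - 1) * ((n : ℚ) - (o : ℚ)))) * ssgWelfare G c σ) := by
  have hon : o ≤ n := by
    rw [ho, hn, ← Finset.card_univ]
    exact Finset.card_filter_le _ _
  have hb2 : 2 ≤ n - o := le_trans ho1 hmin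
  have part1 : ∀ σ : A ≃ V, ssgEquilibrium G c σ → (o : ℚ) - 1 ≤ ssgWelfare G c σ := by
    intro σ heq
    have h2V : 1 < Fintype.card V := by
      rw [← Fintype.card_congr σ, ← hn]
      omega
    have hdeg := ssg_degree_pos G hconn h2V
    have hsplitn : (univ.filter (fun i : A => c i = 0)).card
        + (univ.filter (fun i : A => ¬ c i = 0)).card = n := by
      rw [Finset.card_filter_add_card_filter_not, Finset.card_univ, hn]
    have hmin' : (univ.filter (fun i : A => c i = 0)).card
        ≤ (univ.filter (fun i : A => ¬ c i = 0)).card := by omega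
    have h := ssg_eq_welfare_ge G hdeg heq hmin'
    rw [ho]
    exact h
  have part2 : ∀ σ : A ≃ V,
      ssgWelfare G c σ ≤ (n : ℚ) - 1 / (o : ℚ) - 1 / ((n : ℚ) - (o : ℚ)) := by
    intro σ
    exact ssg_welfare_le G hconn σ ho hn ho1 hmin
  refine ⟨part1, part2, ?_⟩
  intro σ σ' heq
  have h1 := part1 σ heq
  have h2 := part2 σ'
  have hoQ : (2:ℚ) ≤ (o:ℚ) := by exact_mod_cast ho1
  have hbQ : (2:ℚ) ≤ (n:ℚ) - (o:ℚ) := by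
    have : ((n - o : ℕ) : ℚ) = (n:ℚ) - (o:ℚ) := by
      push_cast [Nat.cast_sub hon]; ring
    rw [← this]
    exact_mod_cast hb2
  set R := (((n : ℚ) * (o : ℚ) * ((n : ℚ) - (o : ℚ)) - (n : ℚ)) /
      ((o : ℚ) * ((o : ℚ) - 1) * ((n : ℚ) - (o : ℚ)))) with hR
  have hnQ : (4:ℚ) ≤ (n:ℚ) := by linarith
  have ho0 : (o:ℚ) ≠ 0 := by linarith
  have ho10 : (o:ℚ) - 1 ≠ 0 := by linarith
  have hb0 : (n:ℚ) - (o:ℚ) ≠ 0 := by linarith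
  have hkey : R * ((o:ℚ) - 1) = (n : ℚ) - 1 / (o : ℚ) - 1 / ((n : ℚ) - (o : ℚ)) := by
    rw [hR]
    field_simp
    ring
  have hRnonneg : 0 ≤ R := by
    have h4 : (4:ℚ) ≤ (o:ℚ) * ((n:ℚ) - (o:ℚ)) := by nlinarith
    rw [hR]
    apply div_nonneg
    · nlinarith [mul_le_mul_of_nonneg_left h4 (by linarith : (0:ℚ) ≤ (n:ℚ))]
    · have h5 : (0:ℚ) ≤ (o:ℚ) * ((o:ℚ) - 1) := by nlinarith
      nlinarith
  calc ssgWelfare G c σ' ≤ (n : ℚ) - 1 / (o : ℚ) - 1 / ((n : ℚ) - (o : ℚ)) := h2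
    _ = R * ((o:ℚ) - 1) := hkey.symm
    _ ≤ R * ssgWelfare G c σ := mul_le_mul_of_nonneg_left h1 hRnonneg
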